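/- arXiv:2110.13758 — 2 statements merged into one kernel-verified Lean document; each statement's English description precedes it below -/
import Mathlib

section
/- Let f : [0,δ) → ℝ be continuous and suppose ∫₀^h f(t)/(√t · √(h−t)) dt = 0 for all h ∈ (0,δ). Then f ≡ 0 on [0,δ). -/
open Real Set MeasureTheory intervalIntegral

lemma sqrt_inv_eq_rpow {x : ℝ} (hx : 0 ≤ x) : (Real.sqrt x)⁻¹ = x ^ (-(1/2) : ℝ) := by
  rw [Real.rpow_neg hx, Real.sqrt_eq_rpow]

-- integrability of t ↦ (√(t-a))⁻¹ on a..b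
lemma II_inv_sqrt_sub {a b : ℝ} (hab : a ≤ b) :
    IntervalIntegrable (fun t => (Real.sqrt (t - a))⁻¹) volume a b := by
  have h0 : IntervalIntegrable (fun x : ℝ => x ^ (-(1/2) : ℝ)) volume 0 (b - a) :=
    intervalIntegrable_rpow' (by norm_num)
  have h1 := h0.comp_sub_right a
  simp only [zero_add, sub_add_cancel] at h1
  refine h1.congr ?_
  rw [Set.uIoc_of_le hab]
  intro t ht
  exact (sqrt_inv_eq_rpow (by linarith [ht.1])).symm

lemma II_inv_sqrt_sub' {a b : ℝ} (hab : a ≤ b) :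
    IntervalIntegrable (fun t => (Real.sqrt (b - t))⁻¹) volume a b := by
  have h0 : IntervalIntegrable (fun x : ℝ => x ^ (-(1/2) : ℝ)) volume 0 (b - a) :=
    intervalIntegrable_rpow' (by norm_num)
  have h1 := h0.comp_sub_left b
  simp only [sub_zero, sub_sub_cancel] at h1
  refine h1.symm.congr ?_
  rw [Set.uIoc_of_le hab]
  intro t ht
  exact (sqrt_inv_eq_rpow (by linarith [ht.2])).symm

-- integrability of the beta kernel
lemma II_kernel {a b : ℝ} (hab : a < b) :
    IntervalIntegrable (fun h => (Real.sqrt (b - h))⁻¹ * (Real.sqrt (h - a))⁻¹) volume a b := by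
  set C : ℝ := (Real.sqrt ((b - a) / 2))⁻¹ with hC
  have hCpos : 0 < C := by
    rw [hC]
    exact inv_pos.2 (Real.sqrt_pos.2 (by linarith))
  have hmaj : IntervalIntegrable
      (fun h => C * (Real.sqrt (h - a))⁻¹ + C * (Real.sqrt (b - h))⁻¹) volume a b :=
    ((II_inv_sqrt_sub hab.le).const_mul C).add ((II_inv_sqrt_sub' hab.le).const_mul C)
  refine hmaj.mono_fun' ?_ ?_
  · apply Measurable.aestronglyMeasurable
    exact ((measurable_const.sub measurable_id).sqrt.inv).mul
      ((measurable_id.sub measurable_const).sqrt.inv)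
  · rw [Set.uIoc_of_le hab.le]
    filter_upwards [ae_restrict_mem measurableSet_Ioc] with t ht
    have h1 : 0 < t - a := by linarith [ht.1]
    have h2 : 0 ≤ b - t := by linarith [ht.2]
    have hn1 : (0:ℝ) ≤ (Real.sqrt (b - t))⁻¹ := by positivity
    have hn2 : (0:ℝ) ≤ (Real.sqrt (t - a))⁻¹ := by positivity
    rw [Real.norm_of_nonneg (by positivity)]
    rcases le_total t ((a + b) / 2) with hle | hle
    · have : (Real.sqrt (b - t))⁻¹ ≤ C := by
        rw [hC]
        apply inv_anti₀ (Real.sqrt_pos.2 (by linarith))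
        exact Real.sqrt_le_sqrt (by linarith)
      have hb1 : (Real.sqrt (b - t))⁻¹ * (Real.sqrt (t - a))⁻¹ ≤ C * (Real.sqrt (t - a))⁻¹ :=
        mul_le_mul_of_nonneg_right this hn2
      nlinarith [mul_nonneg hCpos.le hn1]
    · have : (Real.sqrt (t - a))⁻¹ ≤ C := by
        rw [hC]
        apply inv_anti₀ (Real.sqrt_pos.2 (by linarith))
        exact Real.sqrt_le_sqrt (by linarith)
      have hb1 : (Real.sqrt (b - t))⁻¹ * (Real.sqrt (t - a))⁻¹ ≤ (Real.sqrt (b - t))⁻¹ * C :=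
        mul_le_mul_of_nonneg_left this hn1
      nlinarith [mul_nonneg hCpos.le hn2]

lemma beta_integral {a b : ℝ} (hab : a < b) :
    (∫ h in a..b, (Real.sqrt (b - h))⁻¹ * (Real.sqrt (h - a))⁻¹) = Real.pi := by
  have hc : (0:ℝ) < b - a := sub_pos.2 hab
  set G : ℝ → ℝ := fun h => Real.arcsin ((2 * h - a - b) / (b - a)) with hG
  have hcont : ContinuousOn G (Set.Icc a b) :=
    (Real.continuous_arcsin.comp (by continuity)).continuousOn
  have hderiv : ∀ h ∈ Set.Ioo a b,
      HasDerivAt G ((Real.sqrt (b - h))⁻¹ * (Real.sqrt (h - a))⁻¹) h := by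
    intro h hh
    have hu : HasDerivAt (fun h : ℝ => (2 * h - a - b) / (b - a)) (2 / (b - a)) h := by
      have : HasDerivAt (fun h : ℝ => 2 * h - a - b) 2 h := by
        simpa using (((hasDerivAt_id h).const_mul 2).sub_const a).sub_const b
      simpa using this.div_const (b - a)
    set u : ℝ := (2 * h - a - b) / (b - a) with hu_def
    have hune : u ≠ -1 := by
      intro hEq
      rw [hu_def, div_eq_iff hc.ne'] at hEq
      nlinarith [hh.1]
    have hune' : u ≠ 1 := by
      intro hEq
      rw [hu_def, div_eq_iff hc.ne'] at hEq
      nlinarith [hh.2]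
    have harc := (Real.hasDerivAt_arcsin hune hune').comp h hu
    have h1 : 0 < b - h := sub_pos.2 hh.2
    have h2 : 0 < h - a := sub_pos.2 hh.1
    have hsq : 1 - u ^ 2 = (2 * Real.sqrt (b - h) * Real.sqrt (h - a) / (b - a)) ^ 2 := by
      have e1 : Real.sqrt (b - h) ^ 2 = b - h := Real.sq_sqrt h1.le
      have e2 : Real.sqrt (h - a) ^ 2 = h - a := Real.sq_sqrt h2.le
      rw [hu_def]
      field_simp
      nlinarith [e1, e2]
    have hval : 1 / Real.sqrt (1 - u ^ 2) * (2 / (b - a))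
        = (Real.sqrt (b - h))⁻¹ * (Real.sqrt (h - a))⁻¹ := by
      rw [hsq, Real.sqrt_sq (by positivity)]
      have s1 : Real.sqrt (b - h) ≠ 0 := (Real.sqrt_pos.2 h1).ne'
      have s2 : Real.sqrt (h - a) ≠ 0 := (Real.sqrt_pos.2 h2).ne'
      field_simp
    rw [← hval]
    exact harc
  have hInt := II_kernel hab
  have := intervalIntegral.integral_eq_sub_of_hasDerivAt_of_le hab.le hcont hderiv hInt
  rw [this, hG]
  simp only []
  have e1 : (2 * b - a - b) / (b - a) = 1 := by field_simp; ring
  have e2 : (2 * a - a - b) / (b - a) = -1 := by field_simp; ring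
  rw [e1, e2, Real.arcsin_one, Real.arcsin_neg_one]
  ring

lemma II_abel {f : ℝ → ℝ} (hf : Continuous f) {h : ℝ} (hh : 0 < h) {C : ℝ}
    (hC : ∀ x ∈ Set.Icc 0 h, ‖f x‖ ≤ C) :
    IntervalIntegrable (fun t => f t / (Real.sqrt t * Real.sqrt (h - t))) volume 0 h := by
  have hk := (II_kernel hh).const_mul C
  refine hk.mono_fun' ?_ ?_
  · exact (hf.measurable.div
      ((measurable_id.sqrt).mul ((measurable_const.sub measurable_id).sqrt))).aestronglyMeasurable
  · rw [Set.uIoc_of_le hh.le]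
    filter_upwards [ae_restrict_mem measurableSet_Ioc] with t ht
    have h1 : 0 ≤ Real.sqrt t := Real.sqrt_nonneg t
    have h2 : 0 ≤ Real.sqrt (h - t) := Real.sqrt_nonneg _
    have key : ‖f t / (Real.sqrt t * Real.sqrt (h - t))‖
        = ‖f t‖ * (Real.sqrt t * Real.sqrt (h - t))⁻¹ := by
      rw [norm_div, norm_mul]
      rw [Real.norm_of_nonneg h1, Real.norm_of_nonneg h2, div_eq_mul_inv]
    rw [key]
    have : ‖f t‖ * (Real.sqrt t * Real.sqrt (h - t))⁻¹
        ≤ C * (Real.sqrt t * Real.sqrt (h - t))⁻¹ :=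
      mul_le_mul_of_nonneg_right (hC t ⟨ht.1.le, ht.2⟩) (by positivity)
    calc ‖f t‖ * (Real.sqrt t * Real.sqrt (h - t))⁻¹
        ≤ C * (Real.sqrt t * Real.sqrt (h - t))⁻¹ := this
      _ = C * ((Real.sqrt (h - t))⁻¹ * (Real.sqrt (t - 0))⁻¹) := by
          rw [mul_inv, sub_zero]; ring

lemma abel_key {s : ℝ} (hs : 0 < s) {f : ℝ → ℝ} (hf : Continuous f)
    (habel : ∀ h ∈ Set.Ioc (0:ℝ) s,
      (∫ t in (0:ℝ)..h, f t / (Real.sqrt t * Real.sqrt (h - t))) = 0) :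
    (∫ t in (0:ℝ)..s, f t * (Real.sqrt t)⁻¹) = 0 := by
  obtain ⟨C, hC⟩ := (isCompact_Icc (a := (0:ℝ)) (b := s)).exists_bound_of_continuousOn
    hf.continuousOn
  have hC0 : 0 ≤ C := le_trans (norm_nonneg _) (hC 0 ⟨le_refl _, hs.le⟩)
  set S : Set (ℝ × ℝ) := {p | 0 < p.2 ∧ p.2 < p.1 ∧ p.1 < s} with hS_def
  have hS : MeasurableSet S := by
    apply IsOpen.measurableSet
    exact (isOpen_lt continuous_const continuous_snd).inter
      ((isOpen_lt continuous_snd continuous_fst).inter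
        (isOpen_lt continuous_fst continuous_const))
  set F : ℝ × ℝ → ℝ := fun p =>
    (f p.2 / (Real.sqrt p.2 * Real.sqrt (p.1 - p.2))) * (Real.sqrt (s - p.1))⁻¹ with hF_def
  set K : ℝ × ℝ → ℝ := S.indicator F with hK_def
  have hFmeas : Measurable F := by
    apply Measurable.mul
    · exact (hf.measurable.comp measurable_snd).div
        ((measurable_snd.sqrt).mul ((measurable_fst.sub measurable_snd).sqrt))
    · exact ((measurable_const.sub measurable_fst).sqrt).inv
  have hKmeas : Measurable K := hFmeas.indicator hS
  -- sections for h inside and outside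
  have hsec_out : ∀ h : ℝ, h ∉ Set.Ioo (0:ℝ) s → (fun t => K (h, t)) = 0 := by
    intro h hh
    funext t
    apply Set.indicator_of_notMem
    intro hmem
    exact hh ⟨lt_trans hmem.1 hmem.2.1, hmem.2.2⟩
  have hsec_in : ∀ h ∈ Set.Ioo (0:ℝ) s, (fun t => K (h, t)) =
      (Set.Ioo (0:ℝ) h).indicator
        (fun t => (f t / (Real.sqrt t * Real.sqrt (h - t))) * (Real.sqrt (s - h))⁻¹) := by
    intro h hh
    funext t
    by_cases ht : t ∈ Set.Ioo (0:ℝ) h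
    · rw [Set.indicator_of_mem ht, hK_def,
        Set.indicator_of_mem (by exact ⟨ht.1, ht.2, hh.2⟩ : (h, t) ∈ S)]
    · rw [Set.indicator_of_notMem ht, hK_def, Set.indicator_of_notMem]
      intro hmem
      exact ht ⟨hmem.1, hmem.2.1⟩
  -- integrability of sections
  have hsecInt : ∀ h : ℝ, Integrable (fun t => K (h, t)) volume := by
    intro h
    by_cases hh : h ∈ Set.Ioo (0:ℝ) s
    · rw [hsec_in h hh]
      apply MeasureTheory.IntegrableOn.integrable_indicator _ measurableSet_Ioo
      have hII : IntervalIntegrable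
          (fun t => f t / (Real.sqrt t * Real.sqrt (h - t))) volume 0 h :=
        II_abel hf hh.1 (fun x hx => hC x ⟨hx.1, le_trans hx.2 hh.2.le⟩)
      have := (intervalIntegrable_iff_integrableOn_Ioo_of_le hh.1.le).mp hII
      exact this.mul_const _
    · rw [hsec_out h hh]
      exact integrable_zero _ _ _
  -- the beta integral over Ioo
  have hbeta_Ioo : ∀ a b : ℝ, a < b →
      (∫ h in Set.Ioo a b, (Real.sqrt (b - h))⁻¹ * (Real.sqrt (h - a))⁻¹) = Real.pi := by
    intro a b hab
    rw [← MeasureTheory.integral_Ioc_eq_integral_Ioo,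
      ← intervalIntegral.integral_of_le hab.le]
    exact beta_integral hab
  -- bound for the norm integrals
  have hnorm_bound : ∀ h ∈ Set.Ioo (0:ℝ) s,
      (∫ t, ‖K (h, t)‖) ≤ C * Real.pi * (Real.sqrt (s - h))⁻¹ := by
    intro h hh
    have hsecn : (fun t => ‖K (h, t)‖) =
        (Set.Ioo (0:ℝ) h).indicator
          (fun t => ‖(f t / (Real.sqrt t * Real.sqrt (h - t))) * (Real.sqrt (s - h))⁻¹‖) := by
      funext t
      rw [congrFun (hsec_in h hh) t, norm_indicator_eq_indicator_norm]
    rw [hsecn, MeasureTheory.integral_indicator measurableSet_Ioo]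
    have hle : ∀ t ∈ Set.Ioo (0:ℝ) h,
        ‖(f t / (Real.sqrt t * Real.sqrt (h - t))) * (Real.sqrt (s - h))⁻¹‖
        ≤ (C * ((Real.sqrt (h - t))⁻¹ * (Real.sqrt (t - 0))⁻¹)) * (Real.sqrt (s - h))⁻¹ := by
      intro t ht
      rw [norm_mul, Real.norm_of_nonneg (by positivity : (0:ℝ) ≤ (Real.sqrt (s - h))⁻¹)]
      apply mul_le_mul_of_nonneg_right _ (by positivity)
      rw [norm_div, norm_mul, Real.norm_of_nonneg (Real.sqrt_nonneg _),
        Real.norm_of_nonneg (Real.sqrt_nonneg _), div_eq_mul_inv, mul_inv, sub_zero]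
      calc ‖f t‖ * ((Real.sqrt t)⁻¹ * (Real.sqrt (h - t))⁻¹)
          ≤ C * ((Real.sqrt t)⁻¹ * (Real.sqrt (h - t))⁻¹) :=
            mul_le_mul_of_nonneg_right
              (hC t ⟨ht.1.le, le_trans ht.2.le hh.2.le⟩) (by positivity)
        _ = C * ((Real.sqrt (h - t))⁻¹ * (Real.sqrt t)⁻¹) := by ring
    have hint1 : IntegrableOn
        (fun t => ‖(f t / (Real.sqrt t * Real.sqrt (h - t))) * (Real.sqrt (s - h))⁻¹‖)
        (Set.Ioo (0:ℝ) h) volume := by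
      have hII : IntervalIntegrable
          (fun t => f t / (Real.sqrt t * Real.sqrt (h - t))) volume 0 h :=
        II_abel hf hh.1 (fun x hx => hC x ⟨hx.1, le_trans hx.2 hh.2.le⟩)
      exact (((intervalIntegrable_iff_integrableOn_Ioo_of_le hh.1.le).mp hII).mul_const
        _).norm
    have hint2 : IntegrableOn
        (fun t => (C * ((Real.sqrt (h - t))⁻¹ * (Real.sqrt (t - 0))⁻¹)) * (Real.sqrt (s - h))⁻¹)
        (Set.Ioo (0:ℝ) h) volume := by
      have := (II_kernel hh.1).const_mul C
      exact (((intervalIntegrable_iff_integrableOn_Ioo_of_le hh.1.le).mp this).mul_const _)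
    calc (∫ t in Set.Ioo (0:ℝ) h,
          ‖(f t / (Real.sqrt t * Real.sqrt (h - t))) * (Real.sqrt (s - h))⁻¹‖)
        ≤ ∫ t in Set.Ioo (0:ℝ) h,
            (C * ((Real.sqrt (h - t))⁻¹ * (Real.sqrt (t - 0))⁻¹)) * (Real.sqrt (s - h))⁻¹ :=
          MeasureTheory.setIntegral_mono_on hint1 hint2 measurableSet_Ioo hle
      _ = (∫ t in Set.Ioo (0:ℝ) h,
            C * ((Real.sqrt (h - t))⁻¹ * (Real.sqrt (t - 0))⁻¹)) * (Real.sqrt (s - h))⁻¹ := by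
          rw [MeasureTheory.integral_mul_const]
      _ = C * Real.pi * (Real.sqrt (s - h))⁻¹ := by
          rw [MeasureTheory.integral_const_mul, hbeta_Ioo 0 h hh.1]
  -- integrable majorant for the norm-integrals
  have hmaj : Integrable ((Set.Ioo (0:ℝ) s).indicator
      (fun h => C * Real.pi * (Real.sqrt (s - h))⁻¹)) volume := by
    apply MeasureTheory.IntegrableOn.integrable_indicator _ measurableSet_Ioo
    have := (II_inv_sqrt_sub' (a := (0:ℝ)) (b := s) hs.le).const_mul (C * Real.pi)
    exact (intervalIntegrable_iff_integrableOn_Ioo_of_le hs.le).mp this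
  have hKint : Integrable K (volume.prod volume) := by
    rw [MeasureTheory.integrable_prod_iff hKmeas.aestronglyMeasurable]
    constructor
    · exact Filter.Eventually.of_forall hsecInt
    · apply MeasureTheory.Integrable.mono' hmaj
      · exact (hKmeas.norm.aestronglyMeasurable).integral_prod_right'
      · apply Filter.Eventually.of_forall
        intro h
        by_cases hh : h ∈ Set.Ioo (0:ℝ) s
        · rw [Set.indicator_of_mem hh,
            Real.norm_of_nonneg (MeasureTheory.integral_nonneg (fun t => norm_nonneg _))]
          exact hnorm_bound h hh
        · rw [Set.indicator_of_notMem hh]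
          have hz : ∀ t : ℝ, K (h, t) = 0 := fun t => congrFun (hsec_out h hh) t
          simp [hz]
  have hswap : (∫ h, ∫ t, K (h, t)) = ∫ t, ∫ h, K (h, t) :=
    MeasureTheory.integral_integral_swap (f := fun h t => K (h, t)) hKint
  have hLHS : (∫ h, ∫ t, K (h, t)) = 0 := by
    have hz : ∀ h : ℝ, (∫ t, K (h, t)) = 0 := by
      intro h
      by_cases hh : h ∈ Set.Ioo (0:ℝ) s
      · rw [hsec_in h hh, MeasureTheory.integral_indicator measurableSet_Ioo,
          MeasureTheory.integral_mul_const, ← MeasureTheory.integral_Ioc_eq_integral_Ioo,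
          ← intervalIntegral.integral_of_le hh.1.le, habel h ⟨hh.1, hh.2.le⟩, zero_mul]
      · rw [hsec_out h hh]
        simp
    simp [hz]
  have hRHS : (∫ t, ∫ h, K (h, t)) = (∫ t in (0:ℝ)..s, f t * (Real.sqrt t)⁻¹) * Real.pi := by
    have hfun : (fun t => ∫ h, K (h, t)) = (Set.Ioo (0:ℝ) s).indicator
        (fun t => (f t * (Real.sqrt t)⁻¹) * Real.pi) := by
      funext t
      by_cases ht : t ∈ Set.Ioo (0:ℝ) s
      · rw [Set.indicator_of_mem ht]
        have hsec : (fun h => K (h, t)) = (Set.Ioo t s).indicator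
            (fun h => (f t * (Real.sqrt t)⁻¹)
              * ((Real.sqrt (s - h))⁻¹ * (Real.sqrt (h - t))⁻¹)) := by
          funext h
          by_cases hh : h ∈ Set.Ioo t s
          · rw [Set.indicator_of_mem hh, hK_def, Set.indicator_of_mem
              (show (h, t) ∈ S from ⟨ht.1, hh.1, hh.2⟩)]
            show f t / (Real.sqrt t * Real.sqrt (h - t)) * (Real.sqrt (s - h))⁻¹ = _
            rw [div_eq_mul_inv, mul_inv]
            ring
          · rw [Set.indicator_of_notMem hh, hK_def, Set.indicator_of_notMem]
            intro hmem
            exact hh ⟨hmem.2.1, hmem.2.2⟩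
        rw [hsec, MeasureTheory.integral_indicator measurableSet_Ioo,
          MeasureTheory.integral_const_mul, hbeta_Ioo t s ht.2]
      · rw [Set.indicator_of_notMem ht]
        have hz : (fun h => K (h, t)) = 0 := by
          funext h
          apply Set.indicator_of_notMem
          intro hmem
          exact ht ⟨hmem.1, lt_trans hmem.2.1 hmem.2.2⟩
        rw [hz]
        simp
    rw [hfun, MeasureTheory.integral_indicator measurableSet_Ioo,
      ← MeasureTheory.integral_Ioc_eq_integral_Ioo, ← intervalIntegral.integral_of_le hs.le,
      intervalIntegral.integral_mul_const]
  rw [hLHS, hRHS] at hswap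
  rcases mul_eq_zero.mp hswap.symm with h0 | h0
  · exact h0
  · exact absurd h0 Real.pi_ne_zero

lemma II_fsqrt {f : ℝ → ℝ} (hf : Continuous f) {b : ℝ} (hb : 0 ≤ b) :
    IntervalIntegrable (fun t => f t * (Real.sqrt t)⁻¹) volume 0 b := by
  obtain ⟨C, hC⟩ := (isCompact_Icc (a := (0:ℝ)) (b := b)).exists_bound_of_continuousOn
    hf.continuousOn
  refine ((II_inv_sqrt_sub (a := (0:ℝ)) hb).const_mul C).mono_fun' ?_ ?_
  · exact (hf.measurable.mul measurable_id.sqrt.inv).aestronglyMeasurable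
  · rw [Set.uIoc_of_le hb]
    filter_upwards [ae_restrict_mem measurableSet_Ioc] with t ht
    rw [norm_mul, Real.norm_of_nonneg (by positivity : (0:ℝ) ≤ (Real.sqrt t)⁻¹), sub_zero]
    exact mul_le_mul_of_nonneg_right (hC t ⟨ht.1.le, ht.2⟩) (by positivity)

lemma zero_of_abel {s : ℝ} (hs : 0 < s) {f : ℝ → ℝ} (hf : Continuous f)
    (habel : ∀ h ∈ Set.Ioc (0:ℝ) s,
      (∫ t in (0:ℝ)..h, f t / (Real.sqrt t * Real.sqrt (h - t))) = 0) :
    ∀ x ∈ Set.Ico (0:ℝ) s, f x = 0 := by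
  have hF0 : ∀ u ∈ Set.Ioc (0:ℝ) s, (∫ t in (0:ℝ)..u, f t * (Real.sqrt t)⁻¹) = 0 := by
    intro u hu
    exact abel_key hu.1 hf (fun h hh => habel h ⟨hh.1, le_trans hh.2 hu.2⟩)
  have hpos : ∀ x ∈ Set.Ioo (0:ℝ) s, f x = 0 := by
    intro x hx
    have hderiv : HasDerivAt (fun u => ∫ t in (0:ℝ)..u, f t * (Real.sqrt t)⁻¹)
        (f x * (Real.sqrt x)⁻¹) x := by
      apply intervalIntegral.integral_hasDerivAt_right (II_fsqrt hf hx.1.le)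
      · exact (hf.measurable.mul
          measurable_id.sqrt.inv).stronglyMeasurable.stronglyMeasurableAtFilter
      · exact (hf.continuousAt).mul
          ((Real.continuous_sqrt.continuousAt).inv₀ (Real.sqrt_pos.2 hx.1).ne')
    have hev : (fun u => ∫ t in (0:ℝ)..u, f t * (Real.sqrt t)⁻¹) =ᶠ[nhds x]
        (fun _ => (0:ℝ)) := by
      filter_upwards [IsOpen.mem_nhds isOpen_Ioo hx] with u hu
      exact hF0 u ⟨hu.1, hu.2.le⟩
    have : HasDerivAt (fun _ : ℝ => (0:ℝ)) (f x * (Real.sqrt x)⁻¹) x :=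
      hderiv.congr_of_eventuallyEq hev.symm
    have h0 : f x * (Real.sqrt x)⁻¹ = 0 := this.unique (hasDerivAt_const x 0)
    rcases mul_eq_zero.mp h0 with h | h
    · exact h
    · exact absurd h (inv_ne_zero (Real.sqrt_pos.2 hx.1).ne')
  intro x hx
  rcases eq_or_lt_of_le hx.1 with rfl | hx0
  · -- x = 0 : use continuity
    have htend : Filter.Tendsto f (nhdsWithin 0 (Set.Ioo (0:ℝ) s)) (nhds (f 0)) :=
      (hf.continuousAt).continuousWithinAt.tendsto
    have htend0 : Filter.Tendsto f (nhdsWithin 0 (Set.Ioo (0:ℝ) s)) (nhds 0) := by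
      apply Filter.Tendsto.congr' _ tendsto_const_nhds
      filter_upwards [self_mem_nhdsWithin] with u hu
      exact (hpos u hu).symm
    have hne : (nhdsWithin (0:ℝ) (Set.Ioo (0:ℝ) s)).NeBot := by
      apply mem_closure_iff_nhdsWithin_neBot.mp
      rw [closure_Ioo hs.ne]
      exact ⟨le_refl 0, hs.le⟩
    exact tendsto_nhds_unique htend htend0
  · exact hpos x ⟨hx0, hx.2⟩


/-- Injectivity of the Abel-type operator: if `f` is continuous on `[0,δ)` and
`∫₀^h f(t)/(√t √(h−t)) dt = 0` for all `h ∈ (0,δ)`, then `f ≡ 0` on `[0,δ)`. -/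
theorem stmt_5 (δ : ℝ) (hδ : 0 < δ) (f : ℝ → ℝ)
    (hf : ContinuousOn f (Set.Ico 0 δ))
    (habel : ∀ h ∈ Set.Ioo (0 : ℝ) δ,
      (∫ t in (0 : ℝ)..h, f t / (Real.sqrt t * Real.sqrt (h - t))) = 0) :
    ∀ t ∈ Set.Ico (0 : ℝ) δ, f t = 0 := by
  intro x hx
  set s : ℝ := (x + δ) / 2 with hs_def
  have hxs : x < s := by rw [hs_def]; linarith [hx.2]
  have hsδ : s < δ := by rw [hs_def]; linarith [hx.2]
  have hs0 : 0 < s := lt_of_le_of_lt hx.1 hxs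
  set g : ℝ → ℝ := fun t => f (min (max t 0) s) with hg_def
  have hmem : ∀ t : ℝ, min (max t 0) s ∈ Set.Ico 0 δ := by
    intro t
    constructor
    · exact le_min (le_max_right t 0) hs0.le
    · exact lt_of_le_of_lt (min_le_right _ _) hsδ
  have hg : Continuous g :=
    hf.comp_continuous ((continuous_id.max continuous_const).min continuous_const) hmem
  have hgf : ∀ t ∈ Set.Icc (0:ℝ) s, g t = f t := by
    intro t ht
    rw [hg_def]
    simp only [max_eq_left ht.1, min_eq_left ht.2]
  have habel_g : ∀ h ∈ Set.Ioc (0:ℝ) s,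
      (∫ t in (0:ℝ)..h, g t / (Real.sqrt t * Real.sqrt (h - t))) = 0 := by
    intro h hh
    rw [intervalIntegral.integral_congr (g := fun t => f t / (Real.sqrt t * Real.sqrt (h - t)))
      ?_]
    · exact habel h ⟨hh.1, lt_of_le_of_lt hh.2 hsδ⟩
    · intro t ht
      rw [Set.uIcc_of_le hh.1.le] at ht
      simp only []
      rw [hgf t ⟨ht.1, le_trans ht.2 hh.2⟩]
  have := zero_of_abel hs0 hg habel_g x ⟨hx.1, hxs⟩
  rwa [hgf x ⟨hx.1, hxs.le⟩] at this
end

section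
/- Let k ≥ 0 be an integer and let a₁, a₂, c₁, c₂ be real numbers with c₁ ≠ 0 and c₂ ≠ 0. If the function h ↦ a₂ c₂ (−h)^{k + 5/6} + a₁ c₁ (−h)^{k + 1/6}, defined for h ≤ 0, extends to a function of class C^{k+1} on a neighborhood of 0 (being identically 0 for h > 0), then a₁ = a₂ = 0. -/
open Set Filter Real Topology

lemma aux_hasDerivAt (r x : ℝ) (hx : x < 0) :
    HasDerivAt (fun h : ℝ => (-h) ^ r) (-(r * (-x) ^ (r - 1))) x := by
  have h1 : HasDerivAt (fun y : ℝ => y ^ r) (r * (-x) ^ (r - 1)) (-x) :=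
    Real.hasDerivAt_rpow_const (Or.inl (by linarith))
  have h2 := h1.comp x (hasDerivAt_neg x)
  simpa [mul_comm, Function.comp_def] using h2

lemma aux_derivAtZero (F : ℝ → ℝ) (hd : DifferentiableAt ℝ F 0) (h0 : F 0 = 0)
    (hpos : ∀ h > (0:ℝ), F h = 0) : deriv F 0 = 0 := by
  have h1 : HasDerivWithinAt F (deriv F 0) (Set.Ioi 0) 0 :=
    hd.hasDerivAt.hasDerivWithinAt
  have h2 : HasDerivWithinAt F 0 (Set.Ioi 0) 0 :=
    (hasDerivWithinAt_const (0:ℝ) _ (0:ℝ)).congr (fun y hy => hpos y hy) h0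
  have := h1.derivWithin (uniqueDiffWithinAt_Ioi (0:ℝ))
  rw [← this, h2.derivWithin (uniqueDiffWithinAt_Ioi (0:ℝ))]

lemma aux_rpow_lim (r : ℝ) (hr : 0 < r) :
    Tendsto (fun h : ℝ => (-h) ^ r) (𝓝[<](0:ℝ)) (𝓝 0) := by
  have c : ContinuousAt (fun x : ℝ => x ^ r) 0 :=
    Real.continuousAt_rpow_const 0 r (Or.inr hr.le)
  have hneg : Tendsto (fun h : ℝ => -h) (𝓝[<](0:ℝ)) (𝓝 0) := by
    simpa using (continuous_neg.tendsto (0:ℝ)).mono_left nhdsWithin_le_nhds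
  have := c.tendsto.comp hneg
  simpa [Real.zero_rpow hr.ne', Function.comp_def] using this

lemma aux_base (b₁ b₂ r₁ r₂ : ℝ) (hr1 : 0 < r₁) (h12 : r₁ < r₂) (hr2 : r₂ < 1)
    (F : ℝ → ℝ) (hslope : Tendsto (fun h => F h / h) (𝓝[<](0:ℝ)) (𝓝 0))
    (hneg : ∀ h < (0:ℝ), F h = b₂ * (-h) ^ r₂ + b₁ * (-h) ^ r₁) :
    b₁ = 0 ∧ b₂ = 0 := by
  have key : ∀ r : ℝ, 0 < r → r < 1 →
      Tendsto (fun h : ℝ => b₂ * (-h) ^ (r₂ - r) + b₁ * (-h) ^ (r₁ - r))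
        (𝓝[<](0:ℝ)) (𝓝 0) := by
    intro r hr hrlt
    have T1 : Tendsto (fun h : ℝ => F h / h * (-(-h) ^ (1 - r))) (𝓝[<](0:ℝ))
        (𝓝 (0 * -0)) := hslope.mul (aux_rpow_lim (1 - r) (by linarith)).neg
    simp only [neg_zero, mul_zero] at T1
    refine T1.congr' ?_
    filter_upwards [self_mem_nhdsWithin] with h (hh : h < 0)
    have hp : (0:ℝ) < -h := by linarith
    have hinv : h⁻¹ = -((-h) ^ (-1 : ℝ)) := by
      rw [Real.rpow_neg_one]
      field_simp
    rw [hneg h hh, div_eq_mul_inv, hinv]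
    have e1 : (-h) ^ (r₂ - r) = (-h) ^ r₂ * (-h) ^ (-1:ℝ) * (-h) ^ (1 - r) := by
      rw [← Real.rpow_add hp, ← Real.rpow_add hp]; ring_nf
    have e2 : (-h) ^ (r₁ - r) = (-h) ^ r₁ * (-h) ^ (-1:ℝ) * (-h) ^ (1 - r) := by
      rw [← Real.rpow_add hp, ← Real.rpow_add hp]; ring_nf
    rw [e1, e2]; ring
  have hb1 : b₁ = 0 := by
    have T := key r₁ hr1 (by linarith)
    have T' : Tendsto (fun h : ℝ => b₂ * (-h) ^ (r₂ - r₁) + b₁ * (-h) ^ (r₁ - r₁))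
        (𝓝[<](0:ℝ)) (𝓝 b₁) := by
      have h1 : Tendsto (fun h : ℝ => b₂ * (-h) ^ (r₂ - r₁)) (𝓝[<](0:ℝ)) (𝓝 (b₂ * 0)) :=
        (aux_rpow_lim (r₂ - r₁) (by linarith)).const_mul b₂
      have h2 := h1.add (tendsto_const_nhds (x := b₁) (f := 𝓝[<](0:ℝ)))
      simp only [mul_zero, zero_add] at h2
      refine h2.congr fun h => ?_
      simp [sub_self, Real.rpow_zero]
    exact tendsto_nhds_unique T' T
  have hb2 : b₂ = 0 := by
    have T := key r₂ (by linarith) hr2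
    have T' : Tendsto (fun h : ℝ => b₂ * (-h) ^ (r₂ - r₂) + b₁ * (-h) ^ (r₁ - r₂))
        (𝓝[<](0:ℝ)) (𝓝 b₂) := by
      refine (tendsto_const_nhds (x := b₂) (f := 𝓝[<](0:ℝ))).congr fun h => ?_
      simp [hb1, sub_self, Real.rpow_zero]
    exact tendsto_nhds_unique T' T
  exact ⟨hb1, hb2⟩

lemma aux_main : ∀ (k : ℕ) (a₁ a₂ c₁ c₂ : ℝ), c₁ ≠ 0 → c₂ ≠ 0 →
    ∀ (F : ℝ → ℝ) (U : Set ℝ), U ∈ nhds (0:ℝ) → ContDiffOn ℝ ((k:ℕ∞)+1) F U →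
    (∀ h ≤ (0:ℝ), F h = a₂ * c₂ * (-h) ^ ((k:ℝ) + 5/6) + a₁ * c₁ * (-h) ^ ((k:ℝ) + 1/6)) →
    (∀ h > (0:ℝ), F h = 0) → a₁ = 0 ∧ a₂ = 0 := by
  intro k
  induction k with
  | zero =>
    intro a₁ a₂ c₁ c₂ hc₁ hc₂ F U hU hF hneg hpos
    have hF0 : F 0 = 0 := by
      rw [hneg 0 le_rfl, neg_zero, Real.zero_rpow (by positivity),
        Real.zero_rpow (by positivity)]
      ring
    have hd : DifferentiableAt ℝ F 0 :=
      (hF.contDiffAt hU).differentiableAt (ne_of_gt (lt_of_lt_of_le zero_lt_one le_add_self))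
    have hder : deriv F 0 = 0 := aux_derivAtZero F hd hF0 hpos
    have hslope : Tendsto (fun h => F h / h) (𝓝[<](0:ℝ)) (𝓝 0) := by
      have h1 : HasDerivAt F 0 0 := by
        simpa [hder] using hd.hasDerivAt
      have h2 := hasDerivAt_iff_tendsto_slope.mp h1
      have h3 : 𝓝[<](0:ℝ) ≤ 𝓝[≠](0:ℝ) :=
        nhdsWithin_mono 0 fun x hx => ne_of_lt hx
      refine (h2.mono_left h3).congr fun h => ?_
      simp [slope_def_field, hF0]
    have hneg' : ∀ h < (0:ℝ), F h = (a₂ * c₂) * (-h) ^ ((5:ℝ)/6) + (a₁ * c₁) * (-h) ^ ((1:ℝ)/6) := by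
      intro h hh
      have := hneg h hh.le
      push_cast at this
      simpa using this
    obtain ⟨e1, e2⟩ := aux_base (a₁ * c₁) (a₂ * c₂) (1/6) (5/6)
      (by norm_num) (by norm_num) (by norm_num) F hslope hneg'
    exact ⟨by rcases mul_eq_zero.mp e1 with h | h; exact h; exact absurd h hc₁,
           by rcases mul_eq_zero.mp e2 with h | h; exact h; exact absurd h hc₂⟩
  | succ k IH =>
    intro a₁ a₂ c₁ c₂ hc₁ hc₂ F U hU hF hneg hpos
    have hneg' : ∀ h ≤ (0:ℝ), F h =
        a₂ * c₂ * (-h) ^ ((k:ℝ) + 1 + 5/6) + a₁ * c₁ * (-h) ^ ((k:ℝ) + 1 + 1/6) := by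
      intro h hh
      have := hneg h hh
      push_cast at this
      convert this using 4 <;> ring
    have hF0 : F 0 = 0 := by
      rw [hneg' 0 le_rfl, neg_zero, Real.zero_rpow (by positivity),
        Real.zero_rpow (by positivity)]
      ring
    have hd : DifferentiableAt ℝ F 0 :=
      (hF.contDiffAt hU).differentiableAt (ne_of_gt (lt_of_lt_of_le zero_lt_one le_add_self))
    have hder : deriv F 0 = 0 := aux_derivAtZero F hd hF0 hpos
    set V := interior U with hVdef
    have hVopen : IsOpen V := isOpen_interior
    have hVnhds : V ∈ nhds (0:ℝ) := hVopen.mem_nhds (mem_interior_iff_mem_nhds.mpr hU)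
    set b₂ : ℝ := -(((k:ℝ) + 1 + 5/6) * a₂) with hb₂def
    set b₁ : ℝ := -(((k:ℝ) + 1 + 1/6) * a₁) with hb₁def
    set G : ℝ → ℝ := fun h =>
      if h ≤ 0 then b₂ * c₂ * (-h) ^ ((k:ℝ) + 5/6) + b₁ * c₁ * (-h) ^ ((k:ℝ) + 1/6)
      else 0 with hGdef
    have hGF : ∀ x ∈ V, G x = deriv F x := by
      intro x hx
      rcases lt_trichotomy x 0 with hx0 | rfl | hx0
      · have hev : F =ᶠ[nhds x]
            fun h => a₂ * c₂ * (-h) ^ ((k:ℝ) + 1 + 5/6) + a₁ * c₁ * (-h) ^ ((k:ℝ) + 1 + 1/6) := by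
          filter_upwards [Iio_mem_nhds hx0] with y hy using hneg' y hy.le
        rw [hev.deriv_eq]
        have d2 := (aux_hasDerivAt ((k:ℝ) + 1 + 5/6) x hx0).const_mul (a₂ * c₂)
        have d1 := (aux_hasDerivAt ((k:ℝ) + 1 + 1/6) x hx0).const_mul (a₁ * c₁)
        rw [(show HasDerivAt (fun h : ℝ => a₂ * c₂ * (-h) ^ ((k:ℝ) + 1 + 5/6) + a₁ * c₁ * (-h) ^ ((k:ℝ) + 1 + 1/6)) _ x from d2.add d1).deriv]
        have er2 : (k:ℝ) + 1 + 5/6 - 1 = (k:ℝ) + 5/6 := by ring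
        have er1 : (k:ℝ) + 1 + 1/6 - 1 = (k:ℝ) + 1/6 := by ring
        rw [er2, er1]
        simp only [hGdef, if_pos hx0.le, hb₂def, hb₁def]
        ring
      · rw [hder]
        simp only [hGdef, if_pos le_rfl, neg_zero]
        rw [Real.zero_rpow (by positivity), Real.zero_rpow (by positivity)]
        ring
      · have hev : F =ᶠ[nhds x] (fun _ => (0:ℝ)) := by
          filter_upwards [Ioi_mem_nhds hx0] with y hy using hpos y hy
        rw [hev.deriv_eq, deriv_const]
        simp [hGdef, not_le.mpr hx0]
    have hF' : ContDiffOn ℝ ((k:ℕ∞)+1+1) F V := by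
      exact_mod_cast hF.mono interior_subset
    have hG : ContDiffOn ℝ ((k:ℕ∞)+1) G V :=
      (hF'.deriv_of_isOpen hVopen le_rfl).congr hGF
    have hGneg : ∀ h ≤ (0:ℝ), G h =
        b₂ * c₂ * (-h) ^ ((k:ℝ) + 5/6) + b₁ * c₁ * (-h) ^ ((k:ℝ) + 1/6) := by
      intro h hh
      simp only [hGdef, if_pos hh]
    have hGpos : ∀ h > (0:ℝ), G h = 0 := by
      intro h hh
      simp only [hGdef, if_neg (not_le.mpr hh)]
    obtain ⟨e1, e2⟩ := IH b₁ b₂ c₁ c₂ hc₁ hc₂ G V hVnhds hG hGneg hGpos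
    have h1 : a₁ = 0 := by
      have hne : ((k:ℝ) + 1 + 1/6) ≠ 0 := by positivity
      have := neg_eq_zero.mp (hb₁def ▸ e1)
      rcases mul_eq_zero.mp this with h | h
      · exact absurd h hne
      · exact h
    have h2 : a₂ = 0 := by
      have hne : ((k:ℝ) + 1 + 5/6) ≠ 0 := by positivity
      have := neg_eq_zero.mp (hb₂def ▸ e2)
      rcases mul_eq_zero.mp this with h | h
      · exact absurd h hne
      · exact h
    exact ⟨h1, h2⟩

/-- If `h ↦ a₂c₂(−h)^(k+5/6) + a₁c₁(−h)^(k+1/6)` (for `h ≤ 0`, extended by `0`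
for `h > 0`) is of class `C^(k+1)` near `0` and `c₁, c₂ ≠ 0`, then
`a₁ = a₂ = 0`. -/
theorem stmt_7 (k : ℕ) (a₁ a₂ c₁ c₂ : ℝ) (hc₁ : c₁ ≠ 0) (hc₂ : c₂ ≠ 0)
    (F : ℝ → ℝ) (U : Set ℝ) (hU : U ∈ nhds (0 : ℝ))
    (hF : ContDiffOn ℝ ((k : ℕ∞) + 1) F U)
    (hneg : ∀ h ≤ (0 : ℝ), F h =
      a₂ * c₂ * (-h) ^ ((k : ℝ) + 5 / 6) + a₁ * c₁ * (-h) ^ ((k : ℝ) + 1 / 6))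
    (hpos : ∀ h > (0 : ℝ), F h = 0) :
    a₁ = 0 ∧ a₂ = 0 :=
  aux_main k a₁ a₂ c₁ c₂ hc₁ hc₂ F U hU hF hneg hpos
end
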